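/- Let n ≥ 2 and r ≥ 1 be integers, let H be a nonempty finite pairwise independent family of functions from [n] = {1,...,n} to [r] = {1,...,r}, and let δ > 0 and 0 < κ ≤ 1 be reals. Then for every subset A ⊆ [n] with |A| ≥ κn and every j ∈ [r], the number of h ∈ H for which | |A ∩ h^{−1}(j)| − |A|/r | > δ|A|/r is at most |H| · r / (δ^2 κ^2 n). -/

import Mathlib

set_option maxHeartbeats 1000000 in

/-- Chebyshev bound for pairwise independent hash families: for `A ⊆ [n]` with
`|A| ≥ κn` and `j ∈ [r]`, the number of `h ∈ H` with
`||A ∩ h⁻¹(j)| - |A|/r| > δ|A|/r` is at most `|H|·r/(δ²κ²n)`. -/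
theorem stmt10 (n r N : ℕ) (hn : 2 ≤ n) (hr : 1 ≤ r) (hN : 0 < N)
    (H : Fin N → (Fin n → Fin r))
    (hpi : ∀ i i' : Fin n, i ≠ i' → ∀ j j' : Fin r,
      (Finset.univ.filter (fun a : Fin N => H a i = j ∧ H a i' = j')).card * r ^ 2 = N)
    (δ κ : ℝ) (hδ : 0 < δ) (hκ0 : 0 < κ) (hκ1 : κ ≤ 1)
    (A : Finset (Fin n)) (hA : κ * n ≤ (A.card : ℝ)) (j : Fin r) :
    (({a : Fin N |
        |((A.filter (fun x => H a x = j)).card : ℝ) - (A.card : ℝ) / r|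
          > δ * (A.card : ℝ) / r}.ncard : ℝ))
      ≤ (N : ℝ) * r / (δ ^ 2 * κ ^ 2 * n) := by
  classical
  have hr0 : (0:ℝ) < r := by exact_mod_cast hr
  have hn0 : (0:ℝ) < n := by positivity
  have hn0' : (2:ℝ) ≤ n := by exact_mod_cast hn
  set c : ℝ := (A.card : ℝ) with hcdef
  have hcpos : 0 < c := lt_of_lt_of_le (by positivity) hA
  -- indicator
  set f : Fin N → Fin n → ℝ := fun a x => if H a x = j then 1 else 0 with hf
  have hf01 : ∀ a x, f a x = 0 ∨ f a x = 1 := by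
    intro a x; by_cases h : H a x = j <;> simp [hf, h]
  -- marginal counts
  have marg : ∀ x : Fin n, ∑ a : Fin N, f a x = N / r := by
    intro x
    have : Nontrivial (Fin n) := Fin.nontrivial_iff_two_le.mpr hn
    obtain ⟨x', hx'⟩ := exists_ne x
    have hsplit : (Finset.univ.filter (fun a : Fin N => H a x = j)).card
        = ∑ j' : Fin r, (Finset.univ.filter
            (fun a : Fin N => H a x = j ∧ H a x' = j')).card := by
      rw [Finset.card_eq_sum_card_fiberwise
        (f := fun a : Fin N => H a x') (t := Finset.univ) (fun _ _ => Finset.mem_univ _)]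
      refine Finset.sum_congr rfl fun j' _ => ?_
      congr 1
      rw [Finset.filter_filter]
    have h2 : (Finset.univ.filter (fun a : Fin N => H a x = j)).card * r ^ 2 = N * r := by
      rw [hsplit, Finset.sum_mul]
      have : ∀ j' : Fin r, (Finset.univ.filter
          (fun a : Fin N => H a x = j ∧ H a x' = j')).card * r ^ 2 = N :=
        fun j' => hpi x x' (Ne.symm hx') j j'
      simp [this, Finset.sum_const, Finset.card_univ, Nat.mul_comm]
    have h3 : ((Finset.univ.filter (fun a : Fin N => H a x = j)).card : ℝ) = N / r := by
      have h2' : ((Finset.univ.filter (fun a : Fin N => H a x = j)).card : ℝ) * r ^ 2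
          = N * r := by exact_mod_cast h2
      field_simp
      nlinarith [h2']
    calc ∑ a : Fin N, f a x
        = ((Finset.univ.filter (fun a : Fin N => H a x = j)).card : ℝ) := by
          simp [hf, Finset.sum_boole]
      _ = N / r := h3
  -- pair counts
  have pair : ∀ x y : Fin n, x ≠ y → ∑ a : Fin N, f a x * f a y = N / r ^ 2 := by
    intro x y hxy
    have h2 : ((Finset.univ.filter
        (fun a : Fin N => H a x = j ∧ H a y = j)).card : ℝ) * r ^ 2 = N := by
      exact_mod_cast hpi x y hxy j j
    have h3 : ((Finset.univ.filter
        (fun a : Fin N => H a x = j ∧ H a y = j)).card : ℝ) = N / r ^ 2 := by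
      field_simp; linarith [h2]
    calc ∑ a : Fin N, f a x * f a y
        = ∑ a : Fin N, (if H a x = j ∧ H a y = j then (1:ℝ) else 0) := by
          refine Finset.sum_congr rfl fun a _ => ?_
          by_cases h1 : H a x = j <;> by_cases h2 : H a y = j <;> simp [hf, h1, h2]
      _ = ((Finset.univ.filter
            (fun a : Fin N => H a x = j ∧ H a y = j)).card : ℝ) := by
          simp [Finset.sum_boole]
      _ = N / r ^ 2 := h3
  -- X
  set X : Fin N → ℝ := fun a => ((A.filter (fun x => H a x = j)).card : ℝ) with hXdef
  have hX : ∀ a, X a = ∑ x ∈ A, f a x := by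
    intro a; simp [hXdef, hf, Finset.sum_boole]
  -- first moment
  have S1 : ∑ a : Fin N, X a = c * (N / r) := by
    calc ∑ a : Fin N, X a = ∑ a : Fin N, ∑ x ∈ A, f a x := by simp [hX]
      _ = ∑ x ∈ A, ∑ a : Fin N, f a x := Finset.sum_comm
      _ = ∑ x ∈ A, (N / r : ℝ) := Finset.sum_congr rfl fun x _ => marg x
      _ = c * (N / r) := by simp [hcdef, mul_comm]
  -- second moment
  have S2 : ∑ a : Fin N, (X a) ^ 2 = c * (N / r) + c * (c - 1) * (N / r ^ 2) := by
    have expand : ∀ a : Fin N, (X a) ^ 2 = ∑ x ∈ A, ∑ y ∈ A, f a x * f a y := by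
      intro a; rw [hX, sq, Finset.sum_mul_sum]
    calc ∑ a : Fin N, (X a) ^ 2
        = ∑ a : Fin N, ∑ x ∈ A, ∑ y ∈ A, f a x * f a y := by simp [expand]
      _ = ∑ x ∈ A, ∑ a : Fin N, ∑ y ∈ A, f a x * f a y := Finset.sum_comm
      _ = ∑ x ∈ A, ∑ y ∈ A, ∑ a : Fin N, f a x * f a y := by
          exact Finset.sum_congr rfl fun x _ => Finset.sum_comm
      _ = ∑ x ∈ A, ∑ y ∈ A, (if x = y then (N / r : ℝ) else N / r ^ 2) := by
          refine Finset.sum_congr rfl fun x hx => Finset.sum_congr rfl fun y hy => ?_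
          by_cases hxy : x = y
          · subst hxy
            simp only [if_pos rfl]
            have : ∀ a : Fin N, f a x * f a x = f a x := by
              intro a; rcases hf01 a x with h | h <;> simp [h]
            rw [Finset.sum_congr rfl fun a _ => this a]; exact marg x
          · rw [if_neg hxy]; exact pair x y hxy
      _ = ∑ x ∈ A, ((N / r : ℝ) + (c - 1) * (N / r ^ 2)) := by
          refine Finset.sum_congr rfl fun x hx => ?_
          have : ∑ y ∈ A, (if x = y then (N / r : ℝ) else N / r ^ 2)
              = ∑ y ∈ A, ((N / r ^ 2 : ℝ) + (if x = y then (N / r - N / r ^ 2 : ℝ) else 0)) := by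
            refine Finset.sum_congr rfl fun y _ => ?_
            by_cases h : x = y <;> simp [h]
          rw [this, Finset.sum_add_distrib, Finset.sum_ite_eq A x (fun _ => (N / r - N / r ^ 2 : ℝ)),
            if_pos hx, Finset.sum_const, nsmul_eq_mul]
          push_cast [hcdef]
          ring
      _ = c * (N / r) + c * (c - 1) * (N / r ^ 2) := by
          rw [Finset.sum_const, nsmul_eq_mul]
          push_cast [hcdef]
          ring
  -- variance bound
  have Svar : ∑ a : Fin N, (X a - c / r) ^ 2 ≤ c * N / r := by
    have expand : ∀ a : Fin N, (X a - c / r) ^ 2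
        = (X a) ^ 2 - 2 * (c / r) * X a + (c / r) ^ 2 := fun a => by ring
    rw [Finset.sum_congr rfl fun a _ => expand a]
    rw [Finset.sum_add_distrib, Finset.sum_sub_distrib, Finset.sum_const, nsmul_eq_mul,
      ← Finset.mul_sum, S1, S2]
    have hcN : 0 ≤ c * N / r ^ 2 := by positivity
    have hcard : ((Finset.univ : Finset (Fin N)).card : ℝ) = N := by
      simp
    rw [hcard]
    have hid : c * (N / r) + c * (c - 1) * (N / r ^ 2) - 2 * (c / r) * (c * (N / r))
        + (N : ℝ) * (c / r) ^ 2 = c * N / r - c * N / r ^ 2 := by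
      field_simp
      ring
    rw [hid]
    linarith [hcN]
  -- Chebyshev
  set B := Finset.univ.filter (fun a : Fin N => |X a - c / r| > δ * c / r) with hB
  have cheb : (B.card : ℝ) * (δ * c / r) ^ 2 ≤ ∑ a : Fin N, (X a - c / r) ^ 2 := by
    calc (B.card : ℝ) * (δ * c / r) ^ 2 = ∑ a ∈ B, (δ * c / r) ^ 2 := by
          rw [Finset.sum_const, nsmul_eq_mul]
      _ ≤ ∑ a ∈ B, (X a - c / r) ^ 2 := by
          refine Finset.sum_le_sum fun a ha => ?_
          have := (Finset.mem_filter.mp ha).2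
          have h1 : δ * c / r ≤ |X a - c / r| := le_of_lt this
          calc (δ * c / r) ^ 2 ≤ |X a - c / r| ^ 2 := by
                apply pow_le_pow_left₀ (by positivity) h1
            _ = (X a - c / r) ^ 2 := sq_abs _
      _ ≤ ∑ a : Fin N, (X a - c / r) ^ 2 :=
          Finset.sum_le_sum_of_subset_of_nonneg (Finset.subset_univ B)
            (fun a _ _ => sq_nonneg _)
  have key : (B.card : ℝ) * (δ * c / r) ^ 2 ≤ c * N / r := le_trans cheb Svar
  -- final arithmetic
  have hBc : (B.card : ℝ) ≤ (N : ℝ) * r / (δ ^ 2 * κ ^ 2 * n) := by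
    have k2 : (B.card : ℝ) * δ ^ 2 * c ^ 2 ≤ c * N * r := by
      have hk := mul_le_mul_of_nonneg_right key (by positivity : (0:ℝ) ≤ r ^ 2)
      calc (B.card : ℝ) * δ ^ 2 * c ^ 2
          = (B.card : ℝ) * (δ * c / r) ^ 2 * r ^ 2 := by field_simp
        _ ≤ c * N / r * r ^ 2 := hk
        _ = c * N * r := by field_simp
    have h1 : (B.card : ℝ) * δ ^ 2 * c ≤ N * r := by
      refine le_of_mul_le_mul_right ?_ hcpos
      calc (B.card : ℝ) * δ ^ 2 * c * c = (B.card : ℝ) * δ ^ 2 * c ^ 2 := by ring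
        _ ≤ c * N * r := k2
        _ = (N : ℝ) * r * c := by ring
    have h2 : δ ^ 2 * κ ^ 2 * n ≤ δ ^ 2 * c := by
      have hkn : κ ^ 2 * n ≤ c := by
        calc κ ^ 2 * n = κ * (κ * n) := by ring
          _ ≤ 1 * (κ * n) := by
              apply mul_le_mul_of_nonneg_right hκ1 (by positivity)
          _ = κ * n := one_mul _
          _ ≤ c := hA
      calc δ ^ 2 * κ ^ 2 * n = δ ^ 2 * (κ ^ 2 * n) := by ring
        _ ≤ δ ^ 2 * c := mul_le_mul_of_nonneg_left hkn (sq_nonneg δ)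
    rw [le_div_iff₀ (by positivity)]
    have hB0 : (0:ℝ) ≤ (B.card : ℝ) := by positivity
    calc (B.card : ℝ) * (δ ^ 2 * κ ^ 2 * n) ≤ (B.card : ℝ) * (δ ^ 2 * c) :=
          mul_le_mul_of_nonneg_left h2 hB0
      _ = (B.card : ℝ) * δ ^ 2 * c := by ring
      _ ≤ N * r := h1
  -- convert ncard
  have hset : {a : Fin N |
      |((A.filter (fun x => H a x = j)).card : ℝ) - (A.card : ℝ) / r|
        > δ * (A.card : ℝ) / r} = ↑B := by
    ext a
    simp only [Set.mem_setOf_eq, Finset.mem_coe, hB, Finset.mem_filter, Finset.mem_univ,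
      true_and, hXdef, hcdef]
  rw [hset, Set.ncard_coe_finset]
  exact hBc
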